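/- With y₁^± = (∓i·t^{±1}) ⊗ s₁, y₂^± = (i·t^{±1}) ⊗ s₂, y₃^± = i ⊗ s₃ in the loop algebra sl(2,ℂ)[t,t⁻¹], one has [yᵢ^+, yᵢ^-] = 0 for all i ∈ {1,2,3}, and [y₁^±, [y₁^±, y₃^±]] - [y₂^±, [y₂^±, y₃^±]] = 0, [y₃^±, [y₃^±, y₂^±]] = -y₂^±, [y₃^±, [y₃^±, y₁^±]] = -y₁^±. -/
import Mathlib


open TensorProduct Complex

/-- An element `c·t^k ⊗ s` of the loop algebra `ℂ[t,t⁻¹] ⊗ sl(2,ℂ)`. -/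
noncomputable def loopElt {L : Type*} [LieRing L] [LieAlgebra ℂ L]
    (c : ℂ) (k : ℤ) (s : L) : LaurentPolynomial ℂ ⊗[ℂ] L :=
  (c • LaurentPolynomial.T k) ⊗ₜ[ℂ] s

lemma loopElt_bracket {L : Type*} [LieRing L] [LieAlgebra ℂ L]
    (c d : ℂ) (k l : ℤ) (x y : L) :
    ⁅loopElt c k x, loopElt d l y⁆ = loopElt (c * d) (k + l) ⁅x, y⁆ := by
  simp only [loopElt, LieAlgebra.ExtendScalars.bracket_tmul]
  rw [smul_mul_smul_comm, ← LaurentPolynomial.T_add, add_comm]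

lemma loopElt_smul {L : Type*} [LieRing L] [LieAlgebra ℂ L]
    (c a : ℂ) (k : ℤ) (x : L) :
    loopElt c k (a • x) = loopElt (a * c) k x := by
  simp only [loopElt, TensorProduct.tmul_smul, TensorProduct.smul_tmul', smul_smul]

lemma loopElt_zero {L : Type*} [LieRing L] [LieAlgebra ℂ L] (c : ℂ) (k : ℤ) :
    loopElt c k (0 : L) = 0 := by simp [loopElt]

lemma loopElt_neg {L : Type*} [LieRing L] [LieAlgebra ℂ L] (c : ℂ) (k : ℤ) (x : L) :
    loopElt (-c) k x = -loopElt c k x := by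
  simp [loopElt, neg_smul, TensorProduct.neg_tmul]

/-- Relations (31)-(32) of the trigonometric limit in the loop algebra:
`⁅yᵢ⁺, yᵢ⁻⁆ = 0`, `⁅y₁^±,⁅y₁^±,y₃^±⁆⁆ − ⁅y₂^±,⁅y₂^±,y₃^±⁆⁆ = 0`,
`⁅y₃^±,⁅y₃^±,y₂^±⁆⁆ = −y₂^±`, `⁅y₃^±,⁅y₃^±,y₁^±⁆⁆ = −y₁^±`. -/
theorem stmt13 {L : Type*} [LieRing L] [LieAlgebra ℂ L] (s₁ s₂ s₃ : L)
    (h12 : ⁅s₁, s₂⁆ = I • s₃) (h23 : ⁅s₂, s₃⁆ = I • s₁)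
    (h31 : ⁅s₃, s₁⁆ = I • s₂) :
    letI y1p := loopElt (-I) 1 s₁
    letI y1m := loopElt I (-1) s₁
    letI y2p := loopElt I 1 s₂
    letI y2m := loopElt I (-1) s₂
    letI y3 := loopElt I 0 s₃
    (⁅y1p, y1m⁆ = 0) ∧ (⁅y2p, y2m⁆ = 0) ∧ (⁅y3, y3⁆ = 0) ∧
    (⁅y1p, ⁅y1p, y3⁆⁆ - ⁅y2p, ⁅y2p, y3⁆⁆ = 0) ∧
    (⁅y1m, ⁅y1m, y3⁆⁆ - ⁅y2m, ⁅y2m, y3⁆⁆ = 0) ∧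
    (⁅y3, ⁅y3, y2p⁆⁆ = -y2p) ∧ (⁅y3, ⁅y3, y2m⁆⁆ = -y2m) ∧
    (⁅y3, ⁅y3, y1p⁆⁆ = -y1p) ∧ (⁅y3, ⁅y3, y1m⁆⁆ = -y1m) := by
  have h21 : ⁅s₂, s₁⁆ = (-I) • s₃ := by rw [← lie_skew, h12, neg_smul]
  have h32 : ⁅s₃, s₂⁆ = (-I) • s₁ := by rw [← lie_skew, h23, neg_smul]
  have h13 : ⁅s₁, s₃⁆ = (-I) • s₂ := by rw [← lie_skew, h31, neg_smul]
  refine ⟨?_, ?_, ?_, ?_, ?_, ?_, ?_, ?_, ?_⟩ <;>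
    simp only [loopElt_bracket, h12, h21, h23, h32, h13, h31, lie_self,
      loopElt_smul, loopElt_zero] <;>
    norm_num [Complex.I_mul_I, ← loopElt_neg]
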